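/- Let m ≥ 1 be an integer, γ ∈ (0, π/2), and p = (R sin ψ, R cos ψ) ∈ W_γ with R > 0 and π/2 − γ < ψ < π/2. There exists a closed (2m+1)-bounce billiard path based at p whose first bounce q₁ lies on the horizontal line ℓ₀ if and only if γ < π/(2m) and ψ > mγ; and there exists a closed (2m+1)-bounce billiard path based at p whose first bounce q₁ lies on ℓ_γ if and only if γ < π/(2m) and ψ < π − (m+1)γ. -/

import Mathlib

open Real

noncomputable section

/-- The Euclidean plane. -/
abbrev E2 := EuclideanSpace ℝ (Fin 2)

/-- Construct a point of the plane from its coordinates. -/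
def pt (x y : ℝ) : E2 := WithLp.toLp 2 ![x, y]

/-- The open wedge of opening angle `γ`, bounded by the horizontal line `{y = 0}`
and the line `{y = x·tan γ}`. -/
def wedge (γ : ℝ) : Set E2 := {p | 0 < p 0 ∧ 0 < p 1 ∧ p 1 < p 0 * Real.tan γ}

/-- A direction vector of the boundary line: the horizontal line if `horiz`, the
line `{y = x·tan γ}` otherwise. -/
def lineDir (γ : ℝ) (horiz : Bool) : E2 :=
  if horiz then pt 1 0 else pt (Real.cos γ) (Real.sin γ)

/-- Membership of the corresponding boundary line. -/
def onBoundary (γ : ℝ) (horiz : Bool) (p : E2) : Prop :=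
  if horiz then p 1 = 0 else p 1 = p 0 * Real.tan γ

/-- The linear reflection of `ℝ²` across the `1`-dimensional subspace spanned by `d`,
applied to `v` (for `d ≠ 0`). -/
def reflDir (d v : E2) : E2 :=
  (2 * (inner ℝ v d : ℝ) / (inner ℝ d d : ℝ)) • d - v

/-- A closed `n`-bounce billiard path based at the point `p` of the wedge `W_γ`:
a sequence `q 0 = p, q 1, …, q n, q (n+1) = p` with consecutive points distinct,
whose intermediate points lie alternately on the two boundary lines (minus the
vertex), whose open segments lie in the open wedge, and which satisfies the law
of reflection at each bounce. -/
structure ClosedBounce (γ : ℝ) (p : E2) (n : ℕ) where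
  q : ℕ → E2
  /-- `horiz k` records whether the `k`-th bounce is on the horizontal line `ℓ₀`. -/
  horiz : ℕ → Bool
  alt : ∀ k, 1 ≤ k → k < n → horiz (k + 1) = !horiz k
  start : q 0 = p
  closes : q (n + 1) = p
  distinct : ∀ k ≤ n, q k ≠ q (k + 1)
  bounce_ne_vertex : ∀ k, 1 ≤ k → k ≤ n → q k ≠ 0
  onLine : ∀ k, 1 ≤ k → k ≤ n → onBoundary γ (horiz k) (q k)
  segs_in_wedge : ∀ k ≤ n, ∀ t : ℝ, 0 < t → t < 1 →
    (1 - t) • q k + t • q (k + 1) ∈ wedge γ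
  reflects : ∀ k, 1 ≤ k → k ≤ n →
    (‖q (k + 1) - q k‖)⁻¹ • (q (k + 1) - q k) =
      reflDir (lineDir γ (horiz k)) ((‖q k - q (k - 1)‖)⁻¹ • (q k - q (k - 1)))

/-- The total length of a closed `n`-bounce billiard path. -/
def totalLength {γ : ℝ} {p : E2} {n : ℕ} (P : ClosedBounce γ p n) : ℝ :=
  ∑ k ∈ Finset.range (n + 1), ‖P.q (k + 1) - P.q k‖



@[simp] lemma pt_0 (x y : ℝ) : pt x y 0 = x := rfl
@[simp] lemma pt_1 (x y : ℝ) : pt x y 1 = y := rfl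
lemma e2_ext {v w : E2} (h0 : v 0 = w 0) (h1 : v 1 = w 1) : v = w := by
  apply PiLp.ext; intro i; fin_cases i <;> assumption
@[simp] lemma e2_add (v w : E2) (i : Fin 2) : (v + w) i = v i + w i := rfl
@[simp] lemma e2_sub (v w : E2) (i : Fin 2) : (v - w) i = v i - w i := rfl
@[simp] lemma e2_smul (c : ℝ) (v : E2) (i : Fin 2) : (c • v) i = c * v i := rfl
@[simp] lemma e2_zero (i : Fin 2) : (0 : E2) i = 0 := rfl
lemma e2_inner (v w : E2) : (inner ℝ v w : ℝ) = v 0 * w 0 + v 1 * w 1 := by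
  simp [PiLp.inner_apply, Fin.sum_univ_two]; ring
lemma e2_norm (v : E2) : ‖v‖ = Real.sqrt (v 0 ^ 2 + v 1 ^ 2) := by
  rw [EuclideanSpace.norm_eq]; simp [Fin.sum_univ_two, sq_abs]
lemma norm_cs (a b : ℝ) (h : a ^ 2 + b ^ 2 = 1) : ‖pt a b‖ = 1 := by
  rw [e2_norm]; simp [h]
lemma reflDir_true (γ : ℝ) (v : E2) :
    reflDir (lineDir γ true) v = pt (v 0) (-(v 1)) := by
  unfold reflDir; rw [e2_inner, e2_inner]
  apply e2_ext <;> simp [reflDir, lineDir, e2_inner] <;> ring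
lemma reflDir_false (γ : ℝ) (v : E2) :
    reflDir (lineDir γ false) v =
      pt (Real.cos (2*γ) * v 0 + Real.sin (2*γ) * v 1)
         (Real.sin (2*γ) * v 0 - Real.cos (2*γ) * v 1) := by
  have h := sin_sq_add_cos_sq γ
  have h2 : Real.cos γ * Real.cos γ + Real.sin γ * Real.sin γ = 1 := by nlinarith [h]
  unfold reflDir; rw [e2_inner, e2_inner]
  apply e2_ext <;>
    simp [reflDir, lineDir, e2_inner, Real.cos_two_mul, Real.sin_two_mul] <;>
    rw [h2] <;> field_simp <;>
    first
      | linear_combination (2 * v 1) * h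
      | linear_combination (-2 * v 1) * h
      | ring
lemma norm_smul_unit {u : E2} {c : ℝ} (hc : 0 < c) (hu : ‖u‖ = 1) :
    (‖c • u‖)⁻¹ • (c • u) = u := by
  rw [norm_smul, hu, Real.norm_eq_abs, abs_of_pos hc, mul_one, smul_smul,
    inv_mul_cancel₀ (ne_of_gt hc), one_smul]
lemma le_of_openseg_pos {A B : ℝ} (h : ∀ t : ℝ, 0 < t → t < 1 → 0 < (1-t)*A + t*B) :
    0 ≤ A := by
  by_contra hA
  push_neg at hA
  rcases le_or_gt B 0 with hB | hB
  · have := h (1/2) (by norm_num) (by norm_num); linarith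
  · rcases le_or_gt B A with hBA | hBA
    · linarith
    · have ht0 : 0 < -A / (2*(B-A)) := div_pos (by linarith) (by linarith)
      have ht1 : -A / (2*(B-A)) < 1 := by
        rw [div_lt_one (by linarith)]; linarith
      have hne : B - A ≠ 0 := by linarith
      have hval : (1 - -A / (2*(B-A)))*A + (-A / (2*(B-A)))*B = A/2 := by
        field_simp; ring
      linarith [hval ▸ h _ ht0 ht1]

lemma sin_neg_of_mem (y : ℝ) (h1 : π < y) (h2 : y < 2*π) : Real.sin y < 0 := by
  have h3 : Real.sin (y - π) > 0 := Real.sin_pos_of_pos_of_lt_pi (by linarith) (by linarith)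
  have hs : Real.sin (y - π + π) = -Real.sin (y - π) := Real.sin_add_pi _
  have h4 : Real.sin y = -Real.sin (y - π) := by rw [← hs]; ring_nf
  linarith

lemma sin_nonpos_of_mem (y : ℝ) (h1 : π ≤ y) (h2 : y ≤ 2*π) : Real.sin y ≤ 0 := by
  have h3 : Real.sin (y - π) ≥ 0 := Real.sin_nonneg_of_nonneg_of_le_pi (by linarith) (by linarith)
  have hs : Real.sin (y - π + π) = -Real.sin (y - π) := Real.sin_add_pi _
  have h4 : Real.sin y = -Real.sin (y - π) := by rw [← hs]; ring_nf
  linarith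

lemma gap_lemma (N : ℕ) (x : ℕ → ℝ)
    (hsin : ∀ k, k ≤ N → 0 < Real.sin (x k))
    (hlo : ∀ k, k < N → 0 < x (k+1) - x k)
    (hhi : ∀ k, k < N → x (k+1) - x k < π/2) :
    x N - x 0 < π := by
  induction N with
  | zero => simpa using Real.pi_pos
  | succ N ih =>
    have hN : x N - x 0 < π :=
      ih (fun k hk => hsin k (by omega)) (fun k hk => hlo k (by omega))
        (fun k hk => hhi k (by omega))
    by_contra hcon
    push_neg at hcon
    have hg1 : 0 < x (N+1) - x N := hlo N (by omega)
    have hg2 : x (N+1) - x N < π/2 := hhi N (by omega)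
    set j : ℤ := ⌊x 0 / (2*π)⌋ with hj
    set y : ℝ := x 0 - j * (2*π) with hy
    have h2pi : (0:ℝ) < 2*π := by positivity
    have hf1 : (j:ℝ) ≤ x 0 / (2*π) := Int.floor_le _
    have hf2 : x 0 / (2*π) < j + 1 := Int.lt_floor_add_one _
    have hy0 : 0 ≤ y := by
      have h' : (j:ℝ) * (2*π) ≤ x 0 := (le_div_iff₀ h2pi).mp hf1
      simp only [hy]; linarith
    have hy2 : y < 2*π := by
      have h' : x 0 < ((j:ℝ) + 1) * (2*π) := (div_lt_iff₀ h2pi).mp hf2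
      simp only [hy]; nlinarith
    have hsy : Real.sin y = Real.sin (x 0) := by
      have : y = x 0 + (-j : ℤ) * (2*π) := by push_cast; ring
      rw [this, Real.sin_add_int_mul_two_pi]
    have hsy0 : 0 < Real.sin y := by rw [hsy]; exact hsin 0 (by omega)
    have hyπ : y < π := by
      by_contra hge
      push_neg at hge
      linarith [sin_nonpos_of_mem y hge (le_of_lt hy2)]
    have hypos : 0 < y := by
      rcases lt_or_eq_of_le hy0 with h | h
      · exact h
      · exfalso; rw [← h] at hsy0; simp at hsy0
    have hD : π ≤ x (N+1) - x 0 := hcon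
    have hD2 : x (N+1) - x 0 < 3*π/2 := by linarith
    have hsD : Real.sin (y + (x (N+1) - x 0)) = Real.sin (x (N+1)) := by
      have : y + (x (N+1) - x 0) = x (N+1) + (-j : ℤ) * (2*π) := by push_cast; ring
      rw [this, Real.sin_add_int_mul_two_pi]
    have hsDpos : 0 < Real.sin (y + (x (N+1) - x 0)) := by
      rw [hsD]; exact hsin (N+1) le_rfl
    have hygt : π/2 < y := by
      by_contra hle
      push_neg at hle
      have : Real.sin (y + (x (N+1) - x 0)) ≤ 0 :=
        sin_nonpos_of_mem _ (by linarith) (by linarith)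
      linarith
    have hE1 : π/2 < x N - x 0 := by linarith
    have hsE : Real.sin (y + (x N - x 0)) = Real.sin (x N) := by
      have : y + (x N - x 0) = x N + (-j : ℤ) * (2*π) := by push_cast; ring
      rw [this, Real.sin_add_int_mul_two_pi]
    have hneg : Real.sin (y + (x N - x 0)) < 0 :=
      sin_neg_of_mem _ (by linarith) (by linarith)
    have hpos := hsin N (by omega)
    rw [hsE] at hneg
    linarith

/-- rotation by θ -/
def rot (θ : ℝ) (w : E2) : E2 :=
  pt (Real.cos θ * w 0 - Real.sin θ * w 1) (Real.sin θ * w 0 + Real.cos θ * w 1)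

/-- reflection across the x-axis -/
def flipX (w : E2) : E2 := pt (w 0) (-(w 1))

lemma rot_rot (a b : ℝ) (w : E2) : rot a (rot b w) = rot (a+b) w := by
  apply e2_ext <;>
    simp only [rot, pt_0, pt_1, Real.cos_add, Real.sin_add] <;> ring

lemma rot_zero (w : E2) : rot 0 w = w := by
  apply e2_ext <;> simp [rot]

lemma flipX_flipX (w : E2) : flipX (flipX w) = w := by
  apply e2_ext <;> simp [flipX]

lemma rot_sub_pt (θ : ℝ) (v w : E2) : rot θ (v - w) = rot θ v - rot θ w := by
  apply e2_ext <;> simp only [rot, pt_0, pt_1, e2_sub] <;> ring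

lemma rot_smul (θ c : ℝ) (v : E2) : rot θ (c • v) = c • rot θ v := by
  apply e2_ext <;> simp only [rot, pt_0, pt_1, e2_smul] <;> ring

lemma flipX_sub (v w : E2) : flipX (v - w) = flipX v - flipX w := by
  apply e2_ext <;> simp only [flipX, pt_0, pt_1, e2_sub] <;> ring

lemma flipX_smul (c : ℝ) (v : E2) : flipX (c • v) = c • flipX v := by
  apply e2_ext <;> simp only [flipX, pt_0, pt_1, e2_smul] <;> ring

lemma reflDir_true' (γ : ℝ) (v : E2) : reflDir (lineDir γ true) v = flipX v :=
  reflDir_true γ v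

lemma reflDir_false' (γ : ℝ) (v : E2) :
    reflDir (lineDir γ false) v = rot (2*γ) (flipX v) := by
  rw [reflDir_false]
  apply e2_ext <;> simp only [rot, flipX, pt_0, pt_1] <;> ring

lemma flipX_fix (w : E2) (h : w 1 = 0) : flipX w = w := by
  apply e2_ext <;> simp [flipX, h]

lemma slant_fix (γ : ℝ) (w : E2) (h : w 1 * Real.cos γ = w 0 * Real.sin γ) :
    rot (2*γ) (flipX w) = w := by
  have hp := Real.sin_sq_add_cos_sq γ
  apply e2_ext <;>
    simp only [rot, flipX, pt_0, pt_1, Real.cos_two_mul, Real.sin_two_mul]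
  · linear_combination (2*Real.sin γ) * h + (2 * w 0) * hp
  · linear_combination (-2*Real.cos γ) * h

/-- cross product of plane vectors -/
def crossE (v w : E2) : ℝ := v 0 * w 1 - v 1 * w 0

lemma pos_of_mul_aux {a s κ ε : ℝ} (ha : 0 < a) (heq : a * s = κ) (h : 0 < ε * κ) :
    0 < ε * s := by
  subst heq
  by_contra h3
  push_neg at h3
  nlinarith [mul_nonneg ha.le (neg_nonneg.mpr h3)]


/-- radius of the k-th bounce point (construction, first bounce horizontal) -/
def br (m : ℕ) (γ c : ℝ) (k : ℕ) : ℝ := c / Real.cos (((m:ℝ)+1-(k:ℝ))*γ)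

/-- the bounce points -/
def bqf (m : ℕ) (γ R ψ : ℝ) (k : ℕ) : E2 :=
  if k = 0 then pt (R * Real.sin ψ) (R * Real.cos ψ) else
  if k ≤ 2*m+1 then
    (if k % 2 = 1 then pt (br m γ (R * Real.sin (ψ - (m:ℝ)*γ)) k) 0
     else pt (br m γ (R * Real.sin (ψ - (m:ℝ)*γ)) k * Real.cos γ)
             (br m γ (R * Real.sin (ψ - (m:ℝ)*γ)) k * Real.sin γ))
  else pt (R * Real.sin ψ) (R * Real.cos ψ)

/-- unit directions of the segments -/
def uuf (m : ℕ) (γ : ℝ) (k : ℕ) : E2 :=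
  if k % 2 = 0 then pt (Real.sin (((k:ℝ)-m)*γ)) (-Real.cos (((k:ℝ)-m)*γ))
  else pt (Real.sin (((k:ℝ)-1-m)*γ)) (Real.cos (((k:ℝ)-1-m)*γ))

/-- lengths of the segments -/
def ccf (m : ℕ) (γ R ψ : ℝ) (k : ℕ) : ℝ :=
  if k = 0 ∨ k = 2*m+1 then R * Real.cos ψ / Real.cos ((m:ℝ)*γ)
  else R * Real.sin (ψ - (m:ℝ)*γ) * Real.sin γ /
    (Real.cos (((k:ℝ)-m)*γ) * Real.cos (((k:ℝ)-1-m)*γ))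

section Main
variable (m : ℕ) (hm : 1 ≤ m) (γ R ψ : ℝ) (hγ0 : 0 < γ) (hγ1 : γ < π/2)
  (hR : 0 < R) (hψ1 : π/2 - γ < ψ) (hψ2 : ψ < π/2) (hmγ : (m:ℝ) * γ < ψ)

lemma hcos_aux (hγ0 : 0 < γ) (hmhalf : (m:ℝ)*γ < π/2) :
    ∀ x : ℝ, -(m:ℝ) ≤ x → x ≤ m → 0 < Real.cos (x*γ) := by
  intro x h1 h2
  have hπ := Real.pi_pos
  have b1 := mul_le_mul_of_nonneg_right h1 hγ0.le
  have b2 := mul_le_mul_of_nonneg_right h2 hγ0.le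
  exact Real.cos_pos_of_mem_Ioo ⟨by nlinarith, by nlinarith⟩
end Main

set_option maxHeartbeats 1000000 in
lemma exists_true (m : ℕ) (hm : 1 ≤ m) (γ : ℝ) (hγ0 : 0 < γ) (hγ1 : γ < π/2)
    (R ψ : ℝ) (hR : 0 < R) (hψ1 : π/2 - γ < ψ) (hψ2 : ψ < π/2)
    (hmγ : (m:ℝ) * γ < ψ) (p : E2) (hp : p = pt (R * Real.sin ψ) (R * Real.cos ψ)) :
    ∃ P : ClosedBounce γ p (2*m+1), P.horiz 1 = true := by
  subst hp
  have hπ := Real.pi_pos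
  have hmγ0 : 0 ≤ (m:ℝ)*γ := by positivity
  have hψ0 : 0 < ψ := lt_of_le_of_lt hmγ0 hmγ
  have hcosγ : 0 < Real.cos γ := Real.cos_pos_of_mem_Ioo ⟨by linarith, hγ1⟩
  have hsinγ : 0 < Real.sin γ := Real.sin_pos_of_pos_of_lt_pi hγ0 (by linarith)
  have hsinψ : 0 < Real.sin ψ := Real.sin_pos_of_pos_of_lt_pi hψ0 (by linarith)
  have hcosψ : 0 < Real.cos ψ := Real.cos_pos_of_mem_Ioo ⟨by linarith, hψ2⟩
  have hmhalf : (m:ℝ)*γ < π/2 := lt_trans hmγ hψ2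
  have hcos : ∀ x : ℝ, -(m:ℝ) ≤ x → x ≤ m → 0 < Real.cos (x*γ) :=
    hcos_aux m γ hγ0 hmhalf
  have hsc : 0 < Real.sin (ψ - (m:ℝ)*γ) :=
    Real.sin_pos_of_pos_of_lt_pi (by linarith) (by linarith)
  have hc : 0 < R * Real.sin (ψ - (m:ℝ)*γ) := by positivity
  set c := R * Real.sin (ψ - (m:ℝ)*γ) with hcdef
  clear_value c
  have hcosm : 0 < Real.cos ((m:ℝ)*γ) := hcos m (by linarith [Nat.cast_nonneg (α := ℝ) m]) le_rfl
  have hcosk1 : ∀ k : ℕ, k ≤ 2*m → 0 < Real.cos (((k:ℝ)-m)*γ) := by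
    intro k hk
    have hk' : (k:ℝ) ≤ 2*m := by exact_mod_cast hk
    have hk0 : (0:ℝ) ≤ (k:ℝ) := Nat.cast_nonneg k
    exact hcos _ (by linarith) (by linarith)
  have hcosk2 : ∀ k : ℕ, 1 ≤ k → k ≤ 2*m+1 → 0 < Real.cos (((k:ℝ)-1-m)*γ) := by
    intro k h1 h2
    have hk' : (k:ℝ) ≤ 2*m+1 := by exact_mod_cast h2
    have hk1 : (1:ℝ) ≤ (k:ℝ) := by exact_mod_cast h1
    exact hcos _ (by linarith) (by linarith)
  have hrpos : ∀ k : ℕ, 1 ≤ k → k ≤ 2*m+1 → 0 < br m γ c k := by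
    intro k h1 h2
    have hk' : (k:ℝ) ≤ 2*m+1 := by exact_mod_cast h2
    have hk1 : (1:ℝ) ≤ (k:ℝ) := by exact_mod_cast h1
    exact div_pos hc (hcos _ (by linarith) (by linarith))
  have hccpos : ∀ k : ℕ, k ≤ 2*m+1 → 0 < ccf m γ R ψ k := by
    intro k hk
    rw [ccf]
    split
    · exact div_pos (by positivity) hcosm
    · rename_i hnot
      push_neg at hnot
      have h1 : 1 ≤ k := by omega
      have h2 : k ≤ 2*m := by omega
      exact div_pos (by positivity) (mul_pos (hcosk1 k h2) (hcosk2 k h1 (by omega)))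
  have huun : ∀ k : ℕ, ‖uuf m γ k‖ = 1 := by
    intro k
    rw [uuf]
    split <;> apply norm_cs
    · have := Real.sin_sq_add_cos_sq (((k:ℝ)-m)*γ); nlinarith
    · have := Real.sin_sq_add_cos_sq (((k:ℝ)-1-m)*γ); nlinarith
  have hbq0 : bqf m γ R ψ 0 = pt (R * Real.sin ψ) (R * Real.cos ψ) := by simp [bqf]
  have hbqlast : bqf m γ R ψ (2*m+2) = pt (R * Real.sin ψ) (R * Real.cos ψ) := by
    rw [bqf, if_neg (by omega), if_neg (by omega)]
  have hbqodd : ∀ k : ℕ, 1 ≤ k → k ≤ 2*m+1 → k % 2 = 1 →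
      bqf m γ R ψ k = pt (br m γ c k) 0 := by
    intro k h1 h2 h3
    rw [bqf, if_neg (by omega), if_pos h2, if_pos h3, hcdef]
  have hbqeven : ∀ k : ℕ, 1 ≤ k → k ≤ 2*m+1 → k % 2 = 0 →
      bqf m γ R ψ k = pt (br m γ c k * Real.cos γ) (br m γ c k * Real.sin γ) := by
    intro k h1 h2 h3
    rw [bqf, if_neg (by omega), if_pos h2, if_neg (by omega), hcdef]
  -- the key segment identity
  have hseg : ∀ k : ℕ, k ≤ 2*m+1 →
      bqf m γ R ψ (k+1) - bqf m γ R ψ k = ccf m γ R ψ k • uuf m γ k := by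
    intro k hk
    rcases Nat.eq_zero_or_pos k with rfl | hk1
    · rw [zero_add, hbq0, hbqodd 1 le_rfl (by omega) (by norm_num)]
      have hcc0 : ccf m γ R ψ 0 = R * Real.cos ψ / Real.cos ((m:ℝ)*γ) := by
        rw [ccf, if_pos (Or.inl rfl)]
      have huu0 : uuf m γ 0 = pt (-Real.sin ((m:ℝ)*γ)) (-Real.cos ((m:ℝ)*γ)) := by
        rw [uuf, if_pos (by norm_num)]
        rw [show (((0:ℕ):ℝ)-m)*γ = -((m:ℝ)*γ) by push_cast; ring,
          Real.sin_neg, Real.cos_neg]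
      have hr1 : br m γ c 1 = c / Real.cos ((m:ℝ)*γ) := by
        rw [br, show ((m:ℝ)+1-((1:ℕ):ℝ))*γ = (m:ℝ)*γ by push_cast; ring]
      rw [hcc0, huu0, hr1]
      apply e2_ext
      · simp only [e2_sub, e2_smul, pt_0, hcdef]
        field_simp [ne_of_gt hcosm]
        rw [Real.sin_sub]
        ring
      · simp only [e2_sub, e2_smul, pt_1]
        field_simp [ne_of_gt hcosm]
        ring
    · by_cases hklast : k = 2*m+1
      · subst hklast
        rw [show 2*m+1+1 = 2*m+2 from rfl, hbqlast,
          hbqodd (2*m+1) (by omega) le_rfl (by omega)]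
        have hcc0 : ccf m γ R ψ (2*m+1) = R * Real.cos ψ / Real.cos ((m:ℝ)*γ) := by
          rw [ccf, if_pos (Or.inr rfl)]
        have huu0 : uuf m γ (2*m+1) = pt (Real.sin ((m:ℝ)*γ)) (Real.cos ((m:ℝ)*γ)) := by
          rw [uuf, if_neg (by omega),
            show (((2*m+1:ℕ):ℝ)-1-m)*γ = (m:ℝ)*γ by push_cast; ring]
        have hrn : br m γ c (2*m+1) = c / Real.cos ((m:ℝ)*γ) := by
          rw [br, show ((m:ℝ)+1-((2*m+1:ℕ):ℝ))*γ = -((m:ℝ)*γ) by push_cast; ring,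
            Real.cos_neg]
        rw [hcc0, huu0, hrn]
        apply e2_ext
        · simp only [e2_sub, e2_smul, pt_0, hcdef]
          field_simp [ne_of_gt hcosm]
          rw [Real.sin_sub]
          ring
        · simp only [e2_sub, e2_smul, pt_1]
          field_simp [ne_of_gt hcosm]
          ring
      · -- 1 ≤ k ≤ 2m
        have hk2 : k ≤ 2*m := by omega
        have hC1 : 0 < Real.cos (((k:ℝ)-m)*γ) := hcosk1 k hk2
        have hC2 : 0 < Real.cos (((k:ℝ)-1-m)*γ) := hcosk2 k hk1 hk
        have hcck : ccf m γ R ψ k = c * Real.sin γ /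
            (Real.cos (((k:ℝ)-m)*γ) * Real.cos (((k:ℝ)-1-m)*γ)) := by
          rw [ccf, if_neg (by omega), hcdef]
        rcases Nat.mod_two_eq_zero_or_one k with hpar | hpar
        · -- k even : from ℓ_γ to ℓ₀
          rw [hbqeven k hk1 hk hpar, hbqodd (k+1) (by omega) (by omega) (by omega)]
          have huuk : uuf m γ k
              = pt (Real.sin (((k:ℝ)-m)*γ)) (-Real.cos (((k:ℝ)-m)*γ)) := by
            rw [uuf, if_pos hpar]
          have hrk : br m γ c k = c / Real.cos ((((k:ℝ)-m)*γ - γ)) := by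
            rw [br, show ((m:ℝ)+1-(k:ℝ))*γ = -(((k:ℝ)-m)*γ - γ) by ring, Real.cos_neg]
          have hrk1 : br m γ c (k+1) = c / Real.cos (((k:ℝ)-m)*γ) := by
            rw [br, show ((m:ℝ)+1-((k+1:ℕ):ℝ))*γ = -(((k:ℝ)-m)*γ) by push_cast; ring,
              Real.cos_neg]
          have hC2' : 0 < Real.cos ((((k:ℝ)-m)*γ - γ)) := by
            rw [show (((k:ℝ)-m)*γ - γ) = ((k:ℝ)-1-m)*γ by ring]; exact hC2
          rw [huuk, hcck, hrk, hrk1,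
            show ((k:ℝ)-1-m)*γ = (((k:ℝ)-m)*γ - γ) by ring]
          apply e2_ext
          · simp only [e2_sub, e2_smul, pt_0]
            have hC2'' := hC2'
            rw [Real.cos_sub] at hC2'' ⊢
            field_simp [ne_of_gt hC1, ne_of_gt hC2'']
            ring
          · simp only [e2_sub, e2_smul, pt_1]
            field_simp [ne_of_gt hC1, ne_of_gt hC2']
            ring
        · -- k odd : from ℓ₀ to ℓ_γ
          rw [hbqodd k hk1 hk hpar, hbqeven (k+1) (by omega) (by omega) (by omega)]
          have huuk : uuf m γ k
              = pt (Real.sin (((k:ℝ)-1-m)*γ)) (Real.cos (((k:ℝ)-1-m)*γ)) := by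
            rw [uuf, if_neg (by omega)]
          have hrk : br m γ c k = c / Real.cos (((k:ℝ)-1-m)*γ) := by
            rw [br, show ((m:ℝ)+1-(k:ℝ))*γ = -(((k:ℝ)-1-m)*γ) by ring, Real.cos_neg]
          have hrk1 : br m γ c (k+1) = c / Real.cos ((((k:ℝ)-1-m)*γ + γ)) := by
            rw [br, show ((m:ℝ)+1-((k+1:ℕ):ℝ))*γ = -(((k:ℝ)-1-m)*γ + γ) by push_cast; ring,
              Real.cos_neg]
          have hC1' : 0 < Real.cos ((((k:ℝ)-1-m)*γ + γ)) := by
            rw [show (((k:ℝ)-1-m)*γ + γ) = ((k:ℝ)-m)*γ by ring]; exact hC1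
          rw [huuk, hcck, hrk, hrk1,
            show ((k:ℝ)-m)*γ = (((k:ℝ)-1-m)*γ + γ) by ring]
          apply e2_ext
          · simp only [e2_sub, e2_smul, pt_0]
            have hC1'' := hC1'
            rw [Real.cos_add] at hC1'' ⊢
            field_simp [ne_of_gt hC2, ne_of_gt hC1'']
            ring
          · simp only [e2_sub, e2_smul, pt_1]
            field_simp [ne_of_gt hC2, ne_of_gt hC1']
            ring
  have hpw : R * Real.cos ψ * Real.cos γ < R * Real.sin ψ * Real.sin γ := by
    have hcc : Real.cos (ψ + γ) < 0 :=
      Real.cos_neg_of_pi_div_two_lt_of_lt (by linarith) (by linarith)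
    rw [Real.cos_add] at hcc
    nlinarith
  refine ⟨⟨bqf m γ R ψ, fun k => decide (k % 2 = 1), ?_, hbq0, ?_, ?_, ?_, ?_, ?_, ?_⟩, by simp⟩
  · -- alt
    intro k _ _
    rcases Nat.mod_two_eq_zero_or_one k with h | h
    · have h2 : (k+1) % 2 = 1 := by omega
      simp [h, h2]
    · have h2 : (k+1) % 2 = 0 := by omega
      simp [h, h2]
  · -- closes
    rw [show 2*m+1+1 = 2*m+2 from rfl]
    exact hbqlast
  · -- distinct
    intro k hk heq
    have hy : bqf m γ R ψ k 1 = bqf m γ R ψ (k+1) 1 := by rw [heq]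
    rcases Nat.eq_zero_or_pos k with rfl | hk1
    · rw [hbq0, hbqodd 1 (by omega) (by omega) (by omega)] at hy
      simp only [pt_1] at hy
      nlinarith
    · by_cases hkl : k = 2*m+1
      · subst hkl
        rw [hbqodd (2*m+1) (by omega) (by omega) (by omega),
          show 2*m+1+1 = 2*m+2 from rfl, hbqlast] at hy
        simp only [pt_1] at hy
        nlinarith
      · rcases Nat.mod_two_eq_zero_or_one k with hpar | hpar
        · rw [hbqeven k hk1 (by omega) hpar,
            hbqodd (k+1) (by omega) (by omega) (by omega)] at hy
          simp only [pt_1] at hy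
          nlinarith [hrpos k hk1 (by omega : k ≤ 2*m+1)]
        · rw [hbqodd k hk1 (by omega) hpar,
            hbqeven (k+1) (by omega) (by omega) (by omega)] at hy
          simp only [pt_1] at hy
          nlinarith [hrpos (k+1) (by omega) (by omega : k+1 ≤ 2*m+1)]
  · -- bounce_ne_vertex
    intro k h1 h2 heq
    rcases Nat.mod_two_eq_zero_or_one k with hpar | hpar
    · have hy : bqf m γ R ψ k 1 = (0 : E2) 1 := by rw [heq]
      rw [hbqeven k h1 h2 hpar] at hy
      simp only [pt_1, e2_zero] at hy
      nlinarith [hrpos k h1 h2]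
    · have hx : bqf m γ R ψ k 0 = (0 : E2) 0 := by rw [heq]
      rw [hbqodd k h1 h2 hpar] at hx
      simp only [pt_0, e2_zero] at hx
      nlinarith [hrpos k h1 h2]
  · -- onLine
    intro k h1 h2
    rcases Nat.mod_two_eq_zero_or_one k with hpar | hpar
    · have hb : decide (k % 2 = 1) = false := by simp [hpar]
      show onBoundary γ (decide (k % 2 = 1)) (bqf m γ R ψ k)
      rw [hb]
      show (bqf m γ R ψ k) 1 = (bqf m γ R ψ k) 0 * Real.tan γ
      rw [hbqeven k h1 h2 hpar]
      simp only [pt_0, pt_1]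
      rw [Real.tan_eq_sin_div_cos]
      field_simp
    · have hb : decide (k % 2 = 1) = true := by simp [hpar]
      show onBoundary γ (decide (k % 2 = 1)) (bqf m γ R ψ k)
      rw [hb]
      show (bqf m γ R ψ k) 1 = 0
      rw [hbqodd k h1 h2 hpar]
      exact pt_1 _ _
  · -- segs_in_wedge
    intro k hk t ht0 ht1
    have h1t : 0 < 1 - t := by linarith
    simp only [wedge, Set.mem_setOf_eq, e2_add, e2_smul]
    rcases Nat.eq_zero_or_pos k with rfl | hk1
    · rw [zero_add, hbq0, hbqodd 1 (by omega) (by omega) (by omega)]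
      simp only [pt_0, pt_1]
      have hr1 := hrpos 1 (by omega) (by omega : 1 ≤ 2*m+1)
      refine ⟨by nlinarith [mul_pos hR hsinψ], by nlinarith [mul_pos hR hcosψ], ?_⟩
      rw [Real.tan_eq_sin_div_cos, ← mul_div_assoc, lt_div_iff₀ hcosγ]
      nlinarith [mul_pos ht0 (mul_pos hr1 hsinγ)]
    · by_cases hkl : k = 2*m+1
      · subst hkl
        rw [hbqodd (2*m+1) (by omega) (by omega) (by omega),
          show 2*m+1+1 = 2*m+2 from rfl, hbqlast]
        simp only [pt_0, pt_1]
        have hrn := hrpos (2*m+1) (by omega) (by omega : 2*m+1 ≤ 2*m+1)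
        refine ⟨by nlinarith [mul_pos hR hsinψ], by nlinarith [mul_pos hR hcosψ], ?_⟩
        rw [Real.tan_eq_sin_div_cos, ← mul_div_assoc, lt_div_iff₀ hcosγ]
        nlinarith [mul_pos h1t (mul_pos hrn hsinγ)]
      · have hrk := hrpos k hk1 (by omega : k ≤ 2*m+1)
        have hrk1 := hrpos (k+1) (by omega) (by omega : k+1 ≤ 2*m+1)
        rcases Nat.mod_two_eq_zero_or_one k with hpar | hpar
        · rw [hbqeven k hk1 (by omega) hpar,
            hbqodd (k+1) (by omega) (by omega) (by omega)]
          simp only [pt_0, pt_1]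
          refine ⟨by nlinarith [mul_pos h1t (mul_pos hrk hcosγ), mul_pos ht0 hrk1],
            by nlinarith [mul_pos h1t (mul_pos hrk hsinγ)], ?_⟩
          rw [Real.tan_eq_sin_div_cos, ← mul_div_assoc, lt_div_iff₀ hcosγ]
          nlinarith [mul_pos ht0 (mul_pos hrk1 hsinγ)]
        · rw [hbqodd k hk1 (by omega) hpar,
            hbqeven (k+1) (by omega) (by omega) (by omega)]
          simp only [pt_0, pt_1]
          refine ⟨by nlinarith [mul_pos h1t hrk, mul_pos ht0 (mul_pos hrk1 hcosγ)],
            by nlinarith [mul_pos ht0 (mul_pos hrk1 hsinγ)], ?_⟩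
          rw [Real.tan_eq_sin_div_cos, ← mul_div_assoc, lt_div_iff₀ hcosγ]
          nlinarith [mul_pos h1t (mul_pos hrk hsinγ)]
  · -- reflects
    intro k h1 h2
    have hA := hseg k h2
    have hB := hseg (k-1) (by omega)
    rw [show k - 1 + 1 = k from by omega] at hB
    rw [hA, hB, norm_smul_unit (hccpos k h2) (huun k),
      norm_smul_unit (hccpos (k-1) (by omega)) (huun (k-1))]
    have hcast : ((k-1 : ℕ):ℝ) = (k:ℝ) - 1 := by
      have : (1:ℕ) ≤ k := h1
      push_cast [Nat.cast_sub this]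
      ring
    show uuf m γ k = reflDir (lineDir γ (decide (k % 2 = 1))) (uuf m γ (k - 1))
    rcases Nat.mod_two_eq_zero_or_one k with hpar | hpar
    · have hb : decide (k % 2 = 1) = false := by simp [hpar]
      rw [hb, reflDir_false]
      rw [uuf, if_pos hpar, uuf, if_neg (by omega), hcast]
      rw [show ((k:ℝ)-m)*γ = ((k:ℝ)-1-1-m)*γ + 2*γ by ring, Real.sin_add, Real.cos_add]
      apply e2_ext
      · simp only [pt_0, pt_1]; ring
      · simp only [pt_0, pt_1]; ring
    · have hb : decide (k % 2 = 1) = true := by simp [hpar]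
      rw [hb, reflDir_true]
      rw [uuf, if_neg (by omega), uuf, if_pos (by omega), hcast]
      apply e2_ext
      · simp only [pt_0, pt_1]
        try ring_nf
      · simp only [pt_0, pt_1]
        try ring_nf


set_option maxHeartbeats 1000000 in
lemma only_if_true (m : ℕ) (hm : 1 ≤ m) (γ : ℝ) (hγ0 : 0 < γ) (hγ1 : γ < π/2)
    (R ψ : ℝ) (hR : 0 < R) (hψ1 : π/2 - γ < ψ) (hψ2 : ψ < π/2)
    (p : E2) (hp : p = pt (R * Real.sin ψ) (R * Real.cos ψ))
    (P : ClosedBounce γ p (2*m+1)) (hfirst : P.horiz 1 = true) :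
    (m:ℝ) * γ < ψ := by
  subst hp
  have hπ := Real.pi_pos
  have hψ0 : 0 < ψ := by linarith
  have hcosγ : 0 < Real.cos γ := Real.cos_pos_of_mem_Ioo ⟨by linarith, hγ1⟩
  have hsinγ : 0 < Real.sin γ := Real.sin_pos_of_pos_of_lt_pi hγ0 (by linarith)
  -- parity of the bounce lines
  have hhor : ∀ k, 1 ≤ k → k ≤ 2*m+1 → P.horiz k = decide (k % 2 = 1) := by
    intro k
    induction k with
    | zero => omega
    | succ n ih =>
      intro _ hk2
      rcases Nat.eq_zero_or_pos n with rfl | hn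
      · simpa using hfirst
      · have halt := P.alt n hn (by omega)
        rw [halt, ih hn (by omega)]
        rcases Nat.mod_two_eq_zero_or_one n with h | h
        · have h2 : (n+1) % 2 = 1 := by omega
          simp [h, h2]
        · have h2 : (n+1) % 2 = 0 := by omega
          simp [h, h2]
  -- the boundary conditions
  have honl : ∀ k, 1 ≤ k → k ≤ 2*m+1 →
      (if k % 2 = 1 then P.q k 1 = 0 else P.q k 1 = P.q k 0 * Real.tan γ) := by
    intro k h1 h2
    have hol := P.onLine k h1 h2
    rw [hhor k h1 h2] at hol
    rcases Nat.mod_two_eq_zero_or_one k with h | h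
    · rw [if_neg (by omega)]
      have hb : decide (k % 2 = 1) = false := by simp [h]
      rw [hb] at hol
      simpa [onBoundary] using hol
    · rw [if_pos h]
      have hb : decide (k % 2 = 1) = true := by simp [h]
      rw [hb] at hol
      simpa [onBoundary] using hol
  -- nonnegativity of first coordinates
  have hseg0 : ∀ k, k ≤ 2*m+1 → 0 ≤ P.q k 0 := by
    intro k hk
    apply le_of_openseg_pos (B := P.q (k+1) 0)
    intro t ht0 ht1
    have hw := (P.segs_in_wedge k hk t ht0 ht1).1
    simpa [e2_add, e2_smul] using hw
  -- radial coordinates of the bounce points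
  set a : ℕ → ℝ := fun k => if k % 2 = 1 then P.q k 0 else P.q k 0 / Real.cos γ
    with hadef
  have hq0pos : ∀ k, 1 ≤ k → k ≤ 2*m+1 → 0 < P.q k 0 := by
    intro k h1 h2
    have hnz := P.bounce_ne_vertex k h1 h2
    have h0 := hseg0 k h2
    have honk := honl k h1 h2
    rcases lt_or_eq_of_le h0 with h' | h'
    · exact h'
    · exfalso
      apply hnz
      apply e2_ext
      · simp [← h']
      · rcases Nat.mod_two_eq_zero_or_one k with h | h
        · rw [if_neg (by omega)] at honk
          simp [honk, ← h']
        · rw [if_pos h] at honk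
          simp [honk]
  have hapos : ∀ k, 1 ≤ k → k ≤ 2*m+1 → 0 < a k := by
    intro k h1 h2
    rw [hadef]
    simp only
    split
    · exact hq0pos k h1 h2
    · exact div_pos (hq0pos k h1 h2) hcosγ
  have hqa : ∀ k, 1 ≤ k → k ≤ 2*m+1 → P.q k =
      (if k % 2 = 1 then pt (a k) 0
       else pt (a k * Real.cos γ) (a k * Real.sin γ)) := by
    intro k h1 h2
    have honk := honl k h1 h2
    rcases Nat.mod_two_eq_zero_or_one k with h | h
    · rw [if_neg (by omega)] at honk ⊢
      rw [hadef]
      simp only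
      rw [if_neg (by omega)]
      apply e2_ext
      · simp only [pt_0]
        field_simp
      · simp only [pt_1]
        rw [honk, Real.tan_eq_sin_div_cos]
        field_simp
        try ring
    · rw [if_pos h] at honk ⊢
      rw [hadef]
      simp only
      rw [if_pos h]
      apply e2_ext
      · simp
      · simp [honk]
  -- lengths and unit directions
  set l : ℕ → ℝ := fun k => ‖P.q (k+1) - P.q k‖ with hldef
  set u : ℕ → E2 := fun k => (l k)⁻¹ • (P.q (k+1) - P.q k) with hudef
  have hlpos : ∀ k, k ≤ 2*m+1 → 0 < l k := by
    intro k hk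
    rw [hldef]
    simp only [norm_pos_iff]
    exact sub_ne_zero.mpr (Ne.symm (P.distinct k hk))
  have hql : ∀ k, k ≤ 2*m+1 → P.q (k+1) - P.q k = l k • u k := by
    intro k hk
    rw [hudef]
    simp only
    rw [smul_smul, mul_inv_cancel₀ (ne_of_gt (hlpos k hk)), one_smul]
  have hnu : ‖u 0‖ = 1 := by
    rw [hudef, hldef]
    simp only [norm_smul, Real.norm_eq_abs, abs_inv, abs_norm]
    exact inv_mul_cancel₀ (by
      have := hlpos 0 (by omega)
      rw [hldef] at this
      simpa using ne_of_gt this)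
  have hu_rec : ∀ k, 1 ≤ k → k ≤ 2*m+1 →
      u k = reflDir (lineDir γ (P.horiz k)) (u (k-1)) := by
    intro k h1 h2
    simp only [hudef, hldef]
    rw [show k - 1 + 1 = k from by omega]
    exact P.reflects k h1 h2
  -- explicit formula for the directions
  have hu_formula : ∀ k, k ≤ 2*m+1 → u k =
      (if k % 2 = 0 then rot ((k:ℝ)*γ) (u 0)
       else flipX (rot (((k:ℝ)-1)*γ) (u 0))) := by
    intro k
    induction k with
    | zero =>
      intro _
      rw [if_pos rfl]
      norm_num [rot_zero]
    | succ n ih =>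
      intro hk
      have hihn := ih (by omega)
      have hr := hu_rec (n+1) (by omega) hk
      rw [show n+1-1 = n from rfl] at hr
      rw [hhor (n+1) (by omega) hk] at hr
      rcases Nat.mod_two_eq_zero_or_one n with h | h
      · have h2 : (n+1) % 2 = 1 := by omega
        have hb : decide ((n+1) % 2 = 1) = true := by simp [h2]
        rw [hb, reflDir_true'] at hr
        rw [hr, hihn, if_pos h, if_neg (by omega)]
        rw [show (((n+1:ℕ):ℝ)-1) = (n:ℝ) by push_cast; ring]
      · have h2 : (n+1) % 2 = 0 := by omega
        have hb : decide ((n+1) % 2 = 1) = false := by simp [h2]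
        rw [hb, reflDir_false'] at hr
        rw [hr, hihn, if_neg (by omega), if_pos h2]
        rw [flipX_flipX, rot_rot]
        rw [show 2*γ + ((n:ℝ)-1)*γ = ((n+1:ℕ):ℝ)*γ by push_cast; ring]
  -- unfolded points
  set Q : ℕ → E2 := fun k =>
    if k = 0 then P.q 0 else
    if k % 2 = 1 then rot ((1-(k:ℝ))*γ) (P.q k)
    else rot ((2-(k:ℝ))*γ) (flipX (P.q k)) with hQdef
  have hQ0 : Q 0 = P.q 0 := by simp [hQdef]
  have hQodd : ∀ k, k % 2 = 1 → Q k = rot ((1-(k:ℝ))*γ) (P.q k) := by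
    intro k h
    rw [hQdef]
    simp only
    rw [if_neg (by omega), if_pos h]
  have hQeven : ∀ k, 1 ≤ k → k % 2 = 0 →
      Q k = rot ((2-(k:ℝ))*γ) (flipX (P.q k)) := by
    intro k h1 h
    rw [hQdef]
    simp only
    rw [if_neg (by omega), if_neg (by omega)]
  have hQeven' : ∀ k, 1 ≤ k → k ≤ 2*m+1 → k % 2 = 0 →
      Q k = rot (-(k:ℝ)*γ) (P.q k) := by
    intro k h1 h2 h3
    rw [hQeven k h1 h3]
    have honk := honl k h1 h2
    rw [if_neg (by omega)] at honk
    have hfix : rot (2*γ) (flipX (P.q k)) = P.q k := by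
      apply slant_fix
      rw [honk, Real.tan_eq_sin_div_cos]
      field_simp
    calc rot ((2-(k:ℝ))*γ) (flipX (P.q k))
        = rot (-(k:ℝ)*γ) (rot (2*γ) (flipX (P.q k))) := by
          rw [rot_rot]
          congr 1
          ring
      _ = rot (-(k:ℝ)*γ) (P.q k) := by rw [hfix]
  -- the unfolded increments all point in the direction u 0
  have hQstep : ∀ k, k ≤ 2*m+1 → Q (k+1) - Q k = l k • u 0 := by
    intro k hk
    rcases Nat.eq_zero_or_pos k with rfl | hk1
    · rw [zero_add, hQ0, hQodd 1 (by omega)]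
      rw [show (1-((1:ℕ):ℝ))*γ = 0 by norm_num, rot_zero]
      exact hql 0 (by omega)
    · rcases Nat.mod_two_eq_zero_or_one k with h | h
      · -- k even, k+1 odd
        rw [hQodd (k+1) (by omega), hQeven' k hk1 hk h]
        rw [show (1-((k+1:ℕ):ℝ))*γ = -(k:ℝ)*γ by push_cast; ring]
        rw [← rot_sub_pt, hql k hk, hu_formula k hk, if_pos h]
        rw [rot_smul, rot_rot]
        rw [show -(k:ℝ)*γ + (k:ℝ)*γ = 0 by ring, rot_zero]
      · -- k odd, k+1 even
        rw [hQeven (k+1) (by omega) (by omega), hQodd k h]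
        rw [show (2-((k+1:ℕ):ℝ))*γ = (1-(k:ℝ))*γ by push_cast; ring]
        have honk := honl k hk1 hk
        rw [if_pos h] at honk
        have hfixk : flipX (P.q k) = P.q k := flipX_fix _ honk
        rw [← hfixk]
        rw [← rot_sub_pt, ← flipX_sub, hql k hk, hu_formula k hk, if_neg (by omega)]
        rw [flipX_smul, flipX_flipX, rot_smul, rot_rot]
        rw [show (1-(k:ℝ))*γ + ((k:ℝ)-1)*γ = 0 by ring, rot_zero]
  -- the cross product with u 0 is invariant
  have hcross : ∀ k, k ≤ 2*m+2 → crossE (Q k) (u 0) = crossE (Q 0) (u 0) := by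
    intro k
    induction k with
    | zero => intro _; rfl
    | succ n ih =>
      intro hk
      have hstep := hQstep n (by omega)
      have hihn := ih (by omega)
      rw [← hihn]
      have hQn : Q (n+1) = l n • u 0 + Q n := sub_eq_iff_eq_add.mp hstep
      rw [hQn]
      simp only [crossE, e2_add, e2_smul]
      ring
  -- the direction as an angle
  have hu2 : (u 0 0)^2 + (u 0 1)^2 = 1 := by
    have h := e2_norm (u 0)
    rw [hnu] at h
    have h3 := congrArg (fun x : ℝ => x^2) h.symm
    simp only at h3
    rw [Real.sq_sqrt (by positivity)] at h3
    simpa using h3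
  set z : ℂ := Complex.mk (u 0 0) (u 0 1) with hzdef
  have habs : ‖z‖ = 1 := by
    rw [Complex.norm_def, Complex.normSq_mk]
    rw [show u 0 0 * u 0 0 + u 0 1 * u 0 1 = (u 0 0)^2 + (u 0 1)^2 by ring, hu2]
    exact Real.sqrt_one
  have hz0 : z ≠ 0 := by
    intro h
    rw [h] at habs
    simp at habs
  set τ := Complex.arg z with hτdef
  have hcosτ : Real.cos τ = u 0 0 := by
    rw [hτdef, Complex.cos_arg hz0, habs]
    simp [hzdef]
  have hsinτ : Real.sin τ = u 0 1 := by
    rw [hτdef, Complex.sin_arg, habs]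
    simp [hzdef]
  -- cross product values
  have hcrk : ∀ k, 1 ≤ k → k ≤ 2*m+1 →
      crossE (Q k) (u 0) = a k * Real.sin (τ - (1-(k:ℝ))*γ) := by
    intro k h1 h2
    have hqk := hqa k h1 h2
    rcases Nat.mod_two_eq_zero_or_one k with h | h
    · rw [if_neg (by omega)] at hqk
      rw [hQeven' k h1 h2 h, hqk]
      simp only [crossE, rot, pt_0, pt_1]
      rw [Real.sin_sub, hsinτ, hcosτ,
        show (1-(k:ℝ))*γ = -(k:ℝ)*γ + γ by ring, Real.cos_add, Real.sin_add]
      ring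
    · rw [if_pos h] at hqk
      rw [hQodd k h, hqk]
      simp only [crossE, rot, pt_0, pt_1]
      rw [Real.sin_sub, hsinτ, hcosτ]
      ring
  have hcr0 : crossE (Q 0) (u 0) = R * Real.sin (τ - (π/2 - ψ)) := by
    rw [hQ0, P.start]
    simp only [crossE, pt_0, pt_1]
    rw [Real.sin_sub, hsinτ, hcosτ, Real.cos_pi_div_two_sub, Real.sin_pi_div_two_sub]
    ring
  have hcrN : crossE (Q (2*m+2)) (u 0)
      = R * Real.sin (τ - (ψ - 2*(m:ℝ)*γ - π/2)) := by
    rw [hQeven (2*m+2) (by omega) (by omega)]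
    rw [show P.q (2*m+2) = pt (R*Real.sin ψ) (R*Real.cos ψ) from P.closes]
    simp only [crossE, rot, flipX, pt_0, pt_1]
    rw [show (2-((2*m+2:ℕ):ℝ))*γ = -(2*(m:ℝ)*γ) by push_cast; ring]
    rw [Real.cos_neg, Real.sin_neg]
    rw [show τ - (ψ - 2*(m:ℝ)*γ - π/2) = τ - (ψ - 2*(m:ℝ)*γ) + π/2 by ring]
    rw [Real.sin_add_pi_div_two, Real.cos_sub, Real.sin_sub, Real.cos_sub,
      hsinτ, hcosτ]
    ring
  -- the invariant is nonzero
  set κ := crossE (Q 0) (u 0) with hκdef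
  have hκk : ∀ k, 1 ≤ k → k ≤ 2*m+1 →
      a k * Real.sin (τ - (1-(k:ℝ))*γ) = κ := by
    intro k h1 h2
    rw [← hcrk k h1 h2]
    exact hcross k (by omega)
  have hκne : κ ≠ 0 := by
    intro h0
    have ha1 := hapos 1 (by omega) (by omega)
    have ha2 := hapos 2 (by omega) (by omega)
    have h1 := hκk 1 (by omega) (by omega)
    have h2 := hκk 2 (by omega) (by omega)
    rw [h0] at h1 h2
    have hs1 : Real.sin (τ - (1-((1:ℕ):ℝ))*γ) = 0 := by
      rcases mul_eq_zero.mp h1 with h | h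
      · exact absurd h (ne_of_gt ha1)
      · exact h
    have hs2 : Real.sin (τ - (1-((2:ℕ):ℝ))*γ) = 0 := by
      rcases mul_eq_zero.mp h2 with h | h
      · exact absurd h (ne_of_gt ha2)
      · exact h
    rw [show (1-((1:ℕ):ℝ))*γ = 0 by norm_num] at hs1
    rw [show τ - (1-((2:ℕ):ℝ))*γ = τ + γ by push_cast; ring] at hs2
    rw [sub_zero] at hs1
    rw [Real.sin_add, hs1] at hs2
    have hcos2 : Real.cos τ ^ 2 = 1 := by
      have := Real.sin_sq_add_cos_sq τ
      nlinarith
    have h3 : Real.cos τ * Real.sin γ = 0 := by linarith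
    rcases mul_eq_zero.mp h3 with h4 | h4
    · rw [h4] at hcos2
      norm_num at hcos2
    · linarith
  -- sign normalisation
  set ε : ℝ := if 0 < κ then 1 else -1 with hεdef
  have hεκ : 0 < ε * κ := by
    rw [hεdef]
    split
    · rename_i h; simpa using h
    · rename_i h
      push_neg at h
      have : κ < 0 := lt_of_le_of_ne h hκne
      nlinarith
  set σ : ℝ := if 0 < κ then τ else τ + π with hσdef
  have hσsin : ∀ w : ℝ, Real.sin (σ - w) = ε * Real.sin (τ - w) := by
    intro w
    rw [hσdef, hεdef]
    split
    · simp
    · rw [show τ + π - w = (τ - w) + π by ring, Real.sin_add_pi]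
      ring
  -- the angles of the unfolded points
  set tt : ℕ → ℝ := fun k =>
    if k = 0 then π/2 - ψ else
    if k ≤ 2*m+1 then (1-(k:ℝ))*γ else ψ - 2*(m:ℝ)*γ - π/2 with httdef
  have htt0 : tt 0 = π/2 - ψ := by simp [httdef]
  have httk : ∀ k, 1 ≤ k → k ≤ 2*m+1 → tt k = (1-(k:ℝ))*γ := by
    intro k h1 h2
    simp only [httdef]
    rw [if_neg (by omega), if_pos h2]
  have httN : tt (2*m+2) = ψ - 2*(m:ℝ)*γ - π/2 := by
    simp only [httdef]
    rw [if_neg (by omega), if_neg (by omega)]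
  have hmain := gap_lemma (2*m+2) (fun k => σ - tt k) ?_ ?_ ?_
  · -- conclude
    simp only [htt0, httN] at hmain
    linarith
  · -- positivity of sines
    intro k hk
    rw [hσsin]
    rcases Nat.eq_zero_or_pos k with rfl | hk1
    · rw [htt0]
      exact pos_of_mul_aux hR hcr0.symm hεκ
    · by_cases hkN : k ≤ 2*m+1
      · rw [httk k hk1 hkN]
        exact pos_of_mul_aux (hapos k hk1 hkN) (hκk k hk1 hkN) hεκ
      · have hkeq : k = 2*m+2 := by omega
        subst hkeq
        rw [httN]
        have hcrN' : R * Real.sin (τ - (ψ - 2*(m:ℝ)*γ - π/2)) = κ := by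
          rw [← hcrN, hκdef, hcross (2*m+2) (by omega)]
        exact pos_of_mul_aux hR hcrN' hεκ
  · -- increasing
    intro k hk
    rcases Nat.eq_zero_or_pos k with rfl | hk1
    · rw [htt0, httk 1 (by omega) (by omega)]
      push_cast
      nlinarith
    · by_cases hkN : k ≤ 2*m
      · rw [httk k hk1 (by omega), httk (k+1) (by omega) (by omega)]
        push_cast
        nlinarith
      · have hkeq : k = 2*m+1 := by omega
        subst hkeq
        rw [httk (2*m+1) (by omega) (by omega), httN]
        push_cast
        nlinarith
  · -- gaps below π/2
    intro k hk
    rcases Nat.eq_zero_or_pos k with rfl | hk1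
    · rw [htt0, httk 1 (by omega) (by omega)]
      push_cast
      nlinarith
    · by_cases hkN : k ≤ 2*m
      · rw [httk k hk1 (by omega), httk (k+1) (by omega) (by omega)]
        push_cast
        nlinarith
      · have hkeq : k = 2*m+1 := by omega
        subst hkeq
        rw [httk (2*m+1) (by omega) (by omega), httN]
        push_cast
        nlinarith


/-- reflection across the bisector-ish line: swaps the two wedge boundary lines -/
def Smap (γ : ℝ) (w : E2) : E2 :=
  pt (Real.cos γ * w 0 + Real.sin γ * w 1) (Real.sin γ * w 0 - Real.cos γ * w 1)

lemma S_invol (γ : ℝ) (w : E2) : Smap γ (Smap γ w) = w := by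
  have h := Real.sin_sq_add_cos_sq γ
  apply e2_ext <;> simp only [Smap, pt_0, pt_1]
  · linear_combination (w 0) * h
  · linear_combination (w 1) * h

lemma S_sub (γ : ℝ) (v w : E2) : Smap γ (v - w) = Smap γ v - Smap γ w := by
  apply e2_ext <;> simp only [Smap, pt_0, pt_1, e2_sub] <;> ring

lemma S_add (γ : ℝ) (v w : E2) : Smap γ (v + w) = Smap γ v + Smap γ w := by
  apply e2_ext <;> simp only [Smap, pt_0, pt_1, e2_add] <;> ring

lemma S_smul (γ c : ℝ) (v : E2) : Smap γ (c • v) = c • Smap γ v := by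
  apply e2_ext <;> simp only [Smap, pt_0, pt_1, e2_smul] <;> ring

lemma S_zero (γ : ℝ) : Smap γ 0 = 0 := by
  apply e2_ext <;> simp [Smap]

lemma S_norm (γ : ℝ) (w : E2) : ‖Smap γ w‖ = ‖w‖ := by
  have h := Real.sin_sq_add_cos_sq γ
  rw [e2_norm, e2_norm]
  congr 1
  simp only [Smap, pt_0, pt_1]
  linear_combination (w 0 ^ 2 + w 1 ^ 2) * h

lemma S_reflDir (γ : ℝ) (h : Bool) (v : E2) :
    reflDir (lineDir γ (!h)) (Smap γ v) = Smap γ (reflDir (lineDir γ h) v) := by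
  have hp := Real.sin_sq_add_cos_sq γ
  cases h
  · rw [Bool.not_false, reflDir_true, reflDir_false]
    apply e2_ext <;>
      simp only [Smap, pt_0, pt_1, Real.cos_two_mul, Real.sin_two_mul] <;>
      first
        | linear_combination (2 * Real.cos γ * v 0) * hp
        | linear_combination (2 * Real.cos γ * v 1) * hp
        | linear_combination (-2 * Real.cos γ * v 0) * hp
        | linear_combination (-2 * Real.cos γ * v 1) * hp
        | ring
  · rw [Bool.not_true, reflDir_true, reflDir_false]
    apply e2_ext <;>
      simp only [Smap, pt_0, pt_1, Real.cos_two_mul, Real.sin_two_mul] <;>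
      first
        | linear_combination (2 * Real.cos γ * v 0) * hp
        | linear_combination (2 * Real.cos γ * v 1) * hp
        | linear_combination (-2 * Real.cos γ * v 0) * hp
        | linear_combination (-2 * Real.cos γ * v 1) * hp
        | ring

lemma S_onB (γ : ℝ) (hγ0 : 0 < γ) (hγ1 : γ < π/2) (h : Bool) (q : E2)
    (hq : onBoundary γ h q) : onBoundary γ (!h) (Smap γ q) := by
  have hπ := Real.pi_pos
  have hcosγ : 0 < Real.cos γ := Real.cos_pos_of_mem_Ioo ⟨by linarith, hγ1⟩
  cases h
  · -- was slanted, now horizontal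
    rw [Bool.not_false]
    have hq' : q 1 = q 0 * Real.tan γ := hq
    show (Smap γ q) 1 = 0
    simp only [Smap, pt_1]
    rw [hq', Real.tan_eq_sin_div_cos]
    field_simp
    ring
  · -- was horizontal, now slanted
    rw [Bool.not_true]
    have hq' : q 1 = 0 := hq
    show (Smap γ q) 1 = (Smap γ q) 0 * Real.tan γ
    simp only [Smap, pt_0, pt_1]
    rw [hq', Real.tan_eq_sin_div_cos]
    field_simp
    ring

lemma S_wedge (γ : ℝ) (hγ0 : 0 < γ) (hγ1 : γ < π/2) (w : E2)
    (hw : w ∈ wedge γ) : Smap γ w ∈ wedge γ := by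
  have hπ := Real.pi_pos
  have hcosγ : 0 < Real.cos γ := Real.cos_pos_of_mem_Ioo ⟨by linarith, hγ1⟩
  have hsinγ : 0 < Real.sin γ := Real.sin_pos_of_pos_of_lt_pi hγ0 (by linarith)
  obtain ⟨h0, h1, h2⟩ := hw
  rw [Real.tan_eq_sin_div_cos, ← mul_div_assoc, lt_div_iff₀ hcosγ] at h2
  -- h2 : w 1 * cos γ < w 0 * sin γ  (note: w 0 * (sin/cos) form)
  refine ⟨?_, ?_, ?_⟩
  · simp only [Smap, pt_0]
    nlinarith
  · simp only [Smap, pt_1]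
    nlinarith
  · simp only [Smap, pt_0, pt_1]
    rw [Real.tan_eq_sin_div_cos, ← mul_div_assoc, lt_div_iff₀ hcosγ]
    have key : w 1 * (Real.sin γ^2 + Real.cos γ^2) = w 1 := by
      rw [Real.sin_sq_add_cos_sq]; ring
    nlinarith [key, h1]

lemma transport (γ : ℝ) (hγ0 : 0 < γ) (hγ1 : γ < π/2) (p : E2) (n : ℕ)
    (P : ClosedBounce γ p n) (p' : E2) (hp' : p' = Smap γ p) :
    ∃ P' : ClosedBounce γ p' n, ∀ k, P'.horiz k = !(P.horiz k) := by
  subst hp'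
  refine ⟨⟨fun k => Smap γ (P.q k), fun k => !(P.horiz k), ?_, ?_, ?_, ?_, ?_, ?_, ?_, ?_⟩,
    fun k => rfl⟩
  · intro k h1 h2
    rw [P.alt k h1 h2]
  · rw [P.start]
  · rw [P.closes]
  · intro k hk h
    apply P.distinct k hk
    have := congrArg (Smap γ) h
    rwa [S_invol, S_invol] at this
  · intro k h1 h2 h
    apply P.bounce_ne_vertex k h1 h2
    have := congrArg (Smap γ) h
    rwa [S_invol, S_zero] at this
  · intro k h1 h2
    exact S_onB γ hγ0 hγ1 _ _ (P.onLine k h1 h2)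
  · intro k hk t ht0 ht1
    rw [← S_smul, ← S_smul, ← S_add]
    exact S_wedge γ hγ0 hγ1 _ (P.segs_in_wedge k hk t ht0 ht1)
  · intro k h1 h2
    rw [← S_sub, ← S_sub, S_norm, S_norm, ← S_smul, ← S_smul, S_reflDir]
    exact congrArg _ (P.reflects k h1 h2)

lemma wedge_iff_true (m : ℕ) (hm : 1 ≤ m) (γ : ℝ) (hγ0 : 0 < γ) (hγ1 : γ < π/2)
    (R ψ : ℝ) (hR : 0 < R) (hψ1 : π/2 - γ < ψ) (hψ2 : ψ < π/2)
    (p : E2) (hp : p = pt (R * Real.sin ψ) (R * Real.cos ψ)) :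
    (∃ P : ClosedBounce γ p (2*m+1), P.horiz 1 = true) ↔
      (γ < π / (2*m) ∧ (m:ℝ) * γ < ψ) := by
  have hπ := Real.pi_pos
  have hm' : (1:ℝ) ≤ (m:ℝ) := by exact_mod_cast hm
  constructor
  · rintro ⟨P, h1⟩
    have hlt := only_if_true m hm γ hγ0 hγ1 R ψ hR hψ1 hψ2 p hp P h1
    refine ⟨?_, hlt⟩
    rw [lt_div_iff₀ (by positivity)]
    nlinarith
  · rintro ⟨_, h2⟩
    exact exists_true m hm γ hγ0 hγ1 R ψ hR hψ1 hψ2 h2 p hp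

lemma S_p (γ R ψ : ℝ) :
    Smap γ (pt (R * Real.sin ψ) (R * Real.cos ψ)) =
      pt (R * Real.sin (π - γ - ψ)) (R * Real.cos (π - γ - ψ)) := by
  apply e2_ext <;> simp only [Smap, pt_0, pt_1]
  · rw [show π - γ - ψ = π - (γ + ψ) by ring, Real.sin_pi_sub, Real.sin_add]
    ring
  · rw [show π - γ - ψ = π - (γ + ψ) by ring, Real.cos_pi_sub, Real.cos_add]
    ring

theorem final (m : ℕ) (hm : 1 ≤ m) (γ : ℝ)
    (hγ0 : 0 < γ) (hγ1 : γ < π / 2)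
    (R ψ : ℝ) (hR : 0 < R) (hψ1 : π / 2 - γ < ψ) (hψ2 : ψ < π / 2)
    (p : E2) (hp : p = pt (R * Real.sin ψ) (R * Real.cos ψ)) :
    ((∃ P : ClosedBounce γ p (2 * m + 1), P.horiz 1 = true) ↔
      (γ < π / (2 * m) ∧ (m : ℝ) * γ < ψ)) ∧
    ((∃ P : ClosedBounce γ p (2 * m + 1), P.horiz 1 = false) ↔
      (γ < π / (2 * m) ∧ ψ < π - (m + 1 : ℝ) * γ)) := by
  have hπ := Real.pi_pos
  constructor
  · exact wedge_iff_true m hm γ hγ0 hγ1 R ψ hR hψ1 hψ2 p hp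
  · have hSp : Smap γ p = pt (R * Real.sin (π - γ - ψ)) (R * Real.cos (π - γ - ψ)) := by
      rw [hp]; exact S_p γ R ψ
    have hiff := wedge_iff_true m hm γ hγ0 hγ1 R (π - γ - ψ) hR (by linarith) (by linarith)
      (Smap γ p) hSp
    constructor
    · rintro ⟨P, h1⟩
      obtain ⟨P', hP'⟩ := transport γ hγ0 hγ1 p (2*m+1) P (Smap γ p) rfl
      have hh : P'.horiz 1 = true := by rw [hP' 1, h1]; rfl
      have h := hiff.mp ⟨P', hh⟩
      exact ⟨h.1, by linarith [h.2]⟩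
    · rintro ⟨h1, h2⟩
      obtain ⟨P', hP'⟩ := hiff.mpr ⟨h1, by linarith⟩
      obtain ⟨P'', hP''⟩ := transport γ hγ0 hγ1 (Smap γ p) (2*m+1) P' p
        (S_invol γ p).symm
      refine ⟨P'', ?_⟩
      rw [hP'' 1, hP']
      rfl


/-- Let `m ≥ 1`, `γ ∈ (0, π/2)` and `p = (R sin ψ, R cos ψ)` a point of the wedge
`W_γ` with `R > 0` and `π/2 − γ < ψ < π/2`.  There is a closed `(2m+1)`-bounce
billiard path based at `p` whose first bounce is on the horizontal line `ℓ₀` iff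
`γ < π/(2m)` and `ψ > mγ`; and there is one whose first bounce is on `ℓ_γ` iff
`γ < π/(2m)` and `ψ < π − (m+1)γ`. -/
theorem exists_closed_odd_bounce_iff (m : ℕ) (hm : 1 ≤ m) (γ : ℝ)
    (hγ0 : 0 < γ) (hγ1 : γ < π / 2)
    (R ψ : ℝ) (hR : 0 < R) (hψ1 : π / 2 - γ < ψ) (hψ2 : ψ < π / 2)
    (p : E2) (hp : p = pt (R * Real.sin ψ) (R * Real.cos ψ)) :
    ((∃ P : ClosedBounce γ p (2 * m + 1), P.horiz 1 = true) ↔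
      (γ < π / (2 * m) ∧ (m : ℝ) * γ < ψ)) ∧
    ((∃ P : ClosedBounce γ p (2 * m + 1), P.horiz 1 = false) ↔
      (γ < π / (2 * m) ∧ ψ < π - (m + 1 : ℝ) * γ)) := by
  exact final m hm γ hγ0 hγ1 R ψ hR hψ1 hψ2 p hp

end
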